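/- Suppose F satisfies (F1)–(F3), and suppose the bilinear form a(·;·,·) of the iterative linearization scheme is uniformly coercive with coercivity constant α > L/2. Then condition (F4) holds with C_H = α − L/2; that is, H(uⁿ⁻¹) − H(uⁿ) ≥ (α − L/2)‖uⁿ − uⁿ⁻¹‖_X² for all n ≥ 1, for the iterative linearization sequence (uⁿ)_{n≥0}. -/

import Mathlib

set_option autoImplicit false

/-- If (F1)–(F3) hold and the bilinear form is uniformly coercive with constant
`α > L/2`, then (F4) holds with `C_H = α − L/2`. -/
theorem stmt_8
    {X : Type*} [NormedAddCommGroup X] [InnerProductSpace ℝ X] [CompleteSpace X]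
    (F : X → X →L[ℝ] ℝ) (L ν : ℝ) (hL : 0 < L) (hν : 0 < ν)
    (hF1 : ∀ u v w : X, |F u w - F v w| ≤ L * ‖u - v‖ * ‖w‖)
    (hF2 : ∀ u v : X, ν * ‖u - v‖ ^ 2 ≤ F u (u - v) - F v (u - v))
    (a : X → X →ₗ[ℝ] X →ₗ[ℝ] ℝ) (α β : ℝ) (hα : 0 < α) (hβ : 0 < β)
    (hcoer : ∀ u v : X, α * ‖v‖ ^ 2 ≤ a u v v)
    (hbdd : ∀ u v w : X, a u v w ≤ β * ‖v‖ * ‖w‖)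
    (hαL : L / 2 < α)
    (u : ℕ → X)
    (hiter : ∀ n : ℕ, ∀ w : X, a (u n) (u (n + 1)) w = a (u n) (u n) w - F (u n) w)
    (H : X → ℝ)
    (hF3 : ∀ v w : X, ∀ t : ℝ, HasDerivAt (fun s : ℝ => H (v + s • w)) (F (v + t • w) w) t) :
    ∀ n : ℕ, 1 ≤ n →
      (α - L / 2) * ‖u n - u (n - 1)‖ ^ 2 ≤ H (u (n - 1)) - H (u n) := by
  intro n hn
  obtain ⟨m, rfl⟩ : ∃ m, n = m + 1 := ⟨n - 1, (Nat.succ_pred_eq_of_pos hn).symm⟩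
  simp only [Nat.add_sub_cancel]
  set v := u m with hv
  set e := u (m + 1) - u m with he
  -- Step 1: F v e ≤ -α ‖e‖²
  have hFe : F v e ≤ -(α * ‖e‖ ^ 2) := by
    have h1 := hiter m e
    have h2 : a v e e = a v (u (m + 1)) e - a v (u m) e := by
      have : a v e = a v (u (m + 1)) - a v (u m) := by rw [he, map_sub]
      rw [this, LinearMap.sub_apply]
    have h3 : F v e = -(a v e e) := by rw [h2]; linarith
    have h4 := hcoer v e
    linarith
  -- Step 2: continuity of s ↦ F (v + s•e) e
  have hcont : Continuous (fun s : ℝ => F (v + s • e) e) := by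
    refine LipschitzWith.continuous (K := Real.toNNReal (L * ‖e‖ ^ 2))
      (LipschitzWith.of_dist_le_mul fun s t => ?_)
    have h := hF1 (v + s • e) (v + t • e) e
    have hh : (v + s • e) - (v + t • e) = (s - t) • e := by
      rw [sub_smul]; abel
    rw [hh, norm_smul, Real.norm_eq_abs] at h
    calc dist (F (v + s • e) e) (F (v + t • e) e)
        = |F (v + s • e) e - F (v + t • e) e| := Real.dist_eq _ _
      _ ≤ L * (|s - t| * ‖e‖) * ‖e‖ := h
      _ = (L * ‖e‖ ^ 2) * |s - t| := by ring
      _ = Real.toNNReal (L * ‖e‖ ^ 2) * dist s t := by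
          rw [Real.coe_toNNReal _ (by positivity), Real.dist_eq]
  have hint : IntervalIntegrable (fun t : ℝ => F (v + t • e) e)
      MeasureTheory.volume 0 1 := hcont.intervalIntegrable 0 1
  -- Step 3: FTC
  have hFTC : (∫ t in (0:ℝ)..1, F (v + t • e) e) = H (u (m + 1)) - H v := by
    have := intervalIntegral.integral_eq_sub_of_hasDerivAt
      (f := fun s : ℝ => H (v + s • e)) (f' := fun t : ℝ => F (v + t • e) e)
      (fun t _ => hF3 v e t) hint
    rw [this]
    have h1 : v + e = u (m + 1) := by rw [he]; abel
    simp only [one_smul, zero_smul, add_zero, h1]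
  -- Step 4: integrand bound
  have hbound : (∫ t in (0:ℝ)..1, F (v + t • e) e)
      ≤ ∫ t in (0:ℝ)..1, (F v e + (L * ‖e‖ ^ 2) * t) := by
    refine intervalIntegral.integral_mono_on (by norm_num) hint
      ((continuous_const.add (continuous_const.mul continuous_id')).intervalIntegrable 0 1)
      fun t ht => ?_
    have h := hF1 (v + t • e) v e
    have hh : (v + t • e) - v = t • e := by abel
    rw [hh, norm_smul, Real.norm_eq_abs, abs_of_nonneg ht.1] at h
    have := (abs_le.mp h).2
    nlinarith
  -- Step 5: compute the RHS integral
  have hval : (∫ t in (0:ℝ)..1, (F v e + (L * ‖e‖ ^ 2) * t))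
      = F v e + L / 2 * ‖e‖ ^ 2 := by
    rw [intervalIntegral.integral_add (f := fun _ => F v e) (g := fun t => L * ‖e‖ ^ 2 * t) (intervalIntegrable_const)
      ((continuous_const.mul continuous_id').intervalIntegrable 0 1),
      intervalIntegral.integral_const, intervalIntegral.integral_const_mul, integral_id]
    simp only [smul_eq_mul]; ring
  rw [hval] at hbound
  rw [hFTC] at hbound
  nlinarith [norm_nonneg e, sq_nonneg ‖e‖]
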